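/- arXiv:1910.11891 — 2 statements merged into one kernel-verified Lean document; each statement's English description precedes it below -/
import Mathlib

section
/- Let G be a simple graph of order 11 with at least 35 edges. Then G contains a K_6 minor. -/
attribute [local instance] Classical.propDecidable

/-- `G` contains a `K_t` minor: `t` pairwise disjoint nonempty branch sets, each inducing a
connected subgraph of `G`, with an edge of `G` between any two of them. -/
def SimpleGraph.HasCompleteMinor {V : Type*} (G : SimpleGraph V) (t : ℕ) : Prop :=
  ∃ B : Fin t → Set V,
    (∀ i, (B i).Nonempty) ∧
    (∀ i, (G.induce (B i)).Connected) ∧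
    (∀ i j, i ≠ j → Disjoint (B i) (B j)) ∧
    (∀ i j, i ≠ j → ∃ u ∈ B i, ∃ v ∈ B j, G.Adj u v)

namespace K6MinorProof


open SimpleGraph Finset

variable {V : Type*}

lemma induce_singleton_connected (G : SimpleGraph V) (x : V) :
    (G.induce ({x} : Set V)).Connected := by
  have : Nonempty (↥({x} : Set V)) := ⟨⟨x, rfl⟩⟩
  refine SimpleGraph.Connected.mk (fun a b => ?_)
  have hab : a = b := Subtype.ext (a.2.trans b.2.symm)
  exact hab ▸ Reachable.refl _

lemma minor_mono {G G' : SimpleGraph V} (h : G ≤ G') (hm : G.HasCompleteMinor 6) :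
    G'.HasCompleteMinor 6 := by
  obtain ⟨B, h1, h2, h3, h4⟩ := hm
  refine ⟨B, h1, fun i => (h2 i).mono (fun a b hab => h hab), h3, fun i j hij => ?_⟩
  obtain ⟨u, hu, v, hv, huv⟩ := h4 i j hij
  exact ⟨u, hu, v, hv, h huv⟩

lemma clique_finset_minor {G : SimpleGraph V} {T : Finset V} (h6 : T.card = 6)
    (hadj : ∀ x ∈ T, ∀ y ∈ T, x ≠ y → G.Adj x y) : G.HasCompleteMinor 6 := by
  classical
  let e := (Finset.equivFinOfCardEq h6).symm
  refine ⟨fun i => {(e i : V)}, fun i => ⟨_, rfl⟩,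
    fun i => induce_singleton_connected G _, fun i j hij => ?_, fun i j hij => ?_⟩
  · refine Set.disjoint_singleton.mpr (fun hEq => hij ?_)
    have := Subtype.ext hEq
    exact e.injective this
  · refine ⟨_, rfl, _, rfl, hadj _ (e i).2 _ (e j).2 (fun hEq => hij (e.injective (Subtype.ext hEq)))⟩


open SimpleGraph Finset
variable {V : Type*}


/-- contraction of edge `uv` into `u`, leaving `v` isolated. -/
def contractAt (G : SimpleGraph V) (u v : V) : SimpleGraph V where
  Adj x y := x ≠ y ∧ x ≠ v ∧ y ≠ v ∧
    (G.Adj x y ∨ (x = u ∧ G.Adj v y) ∨ (y = u ∧ G.Adj v x))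
  symm := by
    constructor
    intro x y h
    obtain ⟨h1, h2, h3, h4⟩ := h
    refine ⟨h1.symm, h3, h2, ?_⟩
    rcases h4 with h | ⟨ha, hb⟩ | ⟨ha, hb⟩
    · exact Or.inl h.symm
    · exact Or.inr (Or.inr ⟨ha, hb⟩)
    · exact Or.inr (Or.inl ⟨ha, hb⟩)
  loopless := by constructor; intro x h; exact h.1 rfl

lemma contract_lift {G : SimpleGraph V} {u v : V} (huv : G.Adj u v)
    (hm : (contractAt G u v).HasCompleteMinor 6) : G.HasCompleteMinor 6 := by
  classical
  obtain ⟨B, hne, hconn, hdisj, hadj⟩ := hm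
  set G₂ := contractAt G u v with hG₂
  -- v lies in no branch set
  have hvnot : ∀ i, v ∉ B i := by
    intro i hv
    have hj : ∃ j, j ≠ i := by
      by_cases h0 : i = 0
      · exact ⟨1, by simp [h0]⟩
      · exact ⟨0, fun h => h0 h.symm⟩
    obtain ⟨j, hj⟩ := hj
    obtain ⟨x, hx, y, hy, hxy⟩ := hadj j i hj
    have hyv : y ≠ v := hxy.2.2.1
    -- walk from v to y inside B i
    obtain ⟨p⟩ := (hconn i).preconnected ⟨v, hv⟩ ⟨y, hy⟩
    cases p with
    | nil => exact hyv rfl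
    | cons h p =>
      exact h.2.1 rfl
  -- branch sets of G
  let B' : Fin 6 → Set V := fun i => if u ∈ B i then B i ∪ {v} else B i
  have hsub : ∀ i, B i ⊆ B' i := by
    intro i x hx
    by_cases h : u ∈ B i <;> simp [B', h, hx]
  have hvmem : ∀ i, u ∈ B i → v ∈ B' i := by
    intro i h; simp [B', h]
  have hmem' : ∀ i (x : V), x ∈ B' i → x ∈ B i ∨ (x = v ∧ u ∈ B i) := by
    intro i x hx
    by_cases h : u ∈ B i
    · simp only [B', if_pos h] at hx
      rcases hx with hx | hx
      · exact Or.inl hx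
      · exact Or.inr ⟨hx, h⟩
    · simp only [B', if_neg h] at hx; exact Or.inl hx
  refine ⟨B', fun i => ⟨_, hsub i (hne i).choose_spec⟩, ?_, ?_, ?_⟩
  · -- connectivity
    intro i
    by_cases hu : u ∈ B i
    · -- B' i = B i ∪ {v}
      have hBi : B' i = B i ∪ {v} := if_pos hu
      rw [hBi]
      have hvB : v ∈ B i ∪ {v} := Or.inr rfl
      -- every element of B i is reachable to u
      have key : ∀ (a b : ↥(B i)) (p : (G₂.induce (B i)).Walk a b),
          (G.induce (B i ∪ {v})).Reachable ⟨a, Or.inl a.2⟩ ⟨b, Or.inl b.2⟩ := by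
        intro a b p
        induction p with
        | nil => exact Reachable.refl _
        | @cons a c b h p ih =>
          refine Reachable.trans ?_ ih
          rcases h.2.2.2 with hg | ⟨ha, hb⟩ | ⟨ha, hb⟩
          · exact Adj.reachable (by exact hg :
              (G.induce (B i ∪ {v})).Adj ⟨a, Or.inl a.2⟩ ⟨c, Or.inl c.2⟩)
          · -- ↑a = u, G.Adj v ↑c : a — v — c
            have r1 : (G.induce (B i ∪ {v})).Adj ⟨a, Or.inl a.2⟩ ⟨v, hvB⟩ := by
              show G.Adj a v
              have ha' : (a : V) = u := ha
              rw [ha']; exact huv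
            have r2 : (G.induce (B i ∪ {v})).Adj ⟨v, hvB⟩ ⟨c, Or.inl c.2⟩ := by
              show G.Adj v c
              exact hb
            exact (Adj.reachable r1).trans (Adj.reachable r2)
          · have r1 : (G.induce (B i ∪ {v})).Adj ⟨a, Or.inl a.2⟩ ⟨v, hvB⟩ := by
              show G.Adj a v
              exact hb.symm
            have r2 : (G.induce (B i ∪ {v})).Adj ⟨v, hvB⟩ ⟨c, Or.inl c.2⟩ := by
              show G.Adj v c
              have ha' : (c : V) = u := ha
              rw [ha']; exact huv.symm
            exact (Adj.reachable r1).trans (Adj.reachable r2)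
      have toV : ∀ (x : ↥(B i ∪ {v})), (G.induce (B i ∪ {v})).Reachable x ⟨v, hvB⟩ := by
        intro x
        rcases x.2 with hx | hx
        · obtain ⟨p⟩ := (hconn i).preconnected ⟨x, hx⟩ ⟨u, hu⟩
          have h1 := key _ _ p
          have h2 : (G.induce (B i ∪ {v})).Adj ⟨u, Or.inl hu⟩ ⟨v, hvB⟩ := by
            show G.Adj u v; exact huv
          have : (⟨(x : V), Or.inl hx⟩ : ↥(B i ∪ {v})) = x := Subtype.ext rfl
          exact this ▸ (h1.trans (Adj.reachable h2))
        · have : x = ⟨v, hvB⟩ := Subtype.ext hx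
          exact this ▸ Reachable.refl _
      have : Nonempty (↥(B i ∪ {v})) := ⟨⟨v, hvB⟩⟩
      exact Connected.mk (fun a b => (toV a).trans (toV b).symm)
    · have hBi : B' i = B i := if_neg hu
      rw [hBi]
      have hle : (G₂.induce (B i)) ≤ (G.induce (B i)) := by
        intro a b hab
        rcases hab.2.2.2 with hg | ⟨ha, _⟩ | ⟨ha, _⟩
        · exact hg
        · exact absurd (ha ▸ a.2) hu
        · exact absurd (ha ▸ b.2) hu
      exact (hconn i).mono hle
  · -- disjoint
    intro i j hij
    rw [Set.disjoint_left]
    intro x hxi hxj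
    rcases hmem' i x hxi with hx | ⟨hx, hui⟩
    · rcases hmem' j x hxj with hy | ⟨hy, huj⟩
      · exact Set.disjoint_left.mp (hdisj i j hij) hx hy
      · exact hvnot i (hy ▸ hx)
    · rcases hmem' j x hxj with hy | ⟨hy, huj⟩
      · exact hvnot j (hx ▸ hy)
      · exact Set.disjoint_left.mp (hdisj i j hij) hui huj
  · -- adjacency
    intro i j hij
    obtain ⟨x, hx, y, hy, hxy⟩ := hadj i j hij
    rcases hxy.2.2.2 with hg | ⟨ha, hb⟩ | ⟨ha, hb⟩
    · exact ⟨x, hsub i hx, y, hsub j hy, hg⟩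
    · exact ⟨v, hvmem i (ha ▸ hx), y, hsub j hy, hb⟩
    · exact ⟨x, hsub i hx, v, hvmem j (ha ▸ hy), hb.symm⟩

open SimpleGraph Finset
variable {V : Type*} [Fintype V]

lemma supp_neighbor {G : SimpleGraph V} {S : Finset V}
    (hsupp : ∀ a b, G.Adj a b → a ∈ S) (u : V) :
    G.neighborFinset u ⊆ S.erase u := by
  intro w hw
  rw [mem_neighborFinset] at hw
  exact Finset.mem_erase.mpr ⟨hw.ne', hsupp w u hw.symm⟩

lemma sum_deg_S {G : SimpleGraph V} {S : Finset V}
    (hsupp : ∀ a b, G.Adj a b → a ∈ S) :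
    ∑ w ∈ S, G.degree w = 2 * #G.edgeFinset := by
  rw [← sum_degrees_eq_twice_card_edges]
  apply Finset.sum_subset (Finset.subset_univ S)
  intro x _ hx
  rw [← card_neighborFinset_eq_degree, Finset.card_eq_zero]
  ext w
  simp only [mem_neighborFinset, Finset.notMem_empty, iff_false]
  intro h
  exact hx (hsupp x w h)

lemma counting_contradiction {G : SimpleGraph V} {S : Finset V}
    (hsupp : ∀ a b, G.Adj a b → a ∈ S)
    (h7 : 7 ≤ S.card) (h11 : S.card ≤ 11)
    (he : #G.edgeFinset = 4 * S.card - 9)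
    (hdeg : ∀ w ∈ S, 6 ≤ G.degree w)
    (hbad : ∀ u v, G.Adj u v → 4 ≤ #(G.neighborFinset u ∩ G.neighborFinset v)) :
    False := by
  classical
  set n := S.card with hn
  set e := #G.edgeFinset with hee
  set h : V → ℕ := fun w => n - 1 - G.degree w with hh
  set M : V → Finset V := fun w => (S.erase w) \ G.neighborFinset w with hM
  have hNsub : ∀ w : V, G.neighborFinset w ⊆ S.erase w := supp_neighbor hsupp
  have hdle : ∀ w ∈ S, G.degree w ≤ n - 1 := by
    intro w hw
    calc G.degree w = #(G.neighborFinset w) := (card_neighborFinset_eq_degree _ _).symm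
    _ ≤ #(S.erase w) := card_le_card (hNsub w)
    _ = n - 1 := by rw [card_erase_of_mem hw]
  have hdh : ∀ w ∈ S, G.degree w + h w = n - 1 := by
    intro w hw
    have := hdle w hw
    simp only [hh]
    omega
  have hMcard : ∀ w ∈ S, #(M w) = h w := by
    intro w hw
    simp only [hM, hh]
    rw [card_sdiff_of_subset (hNsub w), card_erase_of_mem hw, card_neighborFinset_eq_degree]
  have hMmem : ∀ x w : V, x ∈ M w ↔ (x ∈ S ∧ x ≠ w ∧ ¬ G.Adj w x) := by
    intro x w
    simp only [hM, mem_sdiff, mem_erase, mem_neighborFinset]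
    tauto
  have hMsub : ∀ w : V, M w ⊆ S := by
    intro w x hx
    exact ((hMmem x w).mp hx).1
  have hMsymm : ∀ x w : V, x ∈ S → w ∈ S → (x ∈ M w ↔ w ∈ M x) := by
    intro x w hx hw
    rw [hMmem, hMmem]
    constructor
    · rintro ⟨_, h1, h2⟩
      exact ⟨hw, h1.symm, fun hc => h2 hc.symm⟩
    · rintro ⟨_, h1, h2⟩
      exact ⟨hx, h1.symm, fun hc => h2 hc.symm⟩
  -- pointwise inequality for adjacent pairs
  have key : ∀ u v, G.Adj u v → h u + h v ≤ #(M u ∩ M v) + (n - 6) := by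
    intro u v huv
    have hu : u ∈ S := hsupp u v huv
    have hv : v ∈ S := hsupp v u huv.symm
    set U : Finset V := (S.erase u).erase v with hU
    have hvu : v ∈ S.erase u := mem_erase.mpr ⟨huv.ne', hv⟩
    have hUcard : #U = n - 2 := by
      rw [hU, card_erase_of_mem hvu, card_erase_of_mem hu]
      omega
    set X := G.neighborFinset u ∩ G.neighborFinset v with hX
    have hXU : X ⊆ U := by
      intro w hw
      rw [hX, mem_inter, mem_neighborFinset, mem_neighborFinset] at hw
      exact mem_erase.mpr ⟨hw.2.ne', mem_erase.mpr ⟨hw.1.ne', hsupp w u hw.1.symm⟩⟩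
    have hMuU : M u ⊆ U := by
      intro w hw
      rw [hMmem] at hw
      refine mem_erase.mpr ⟨?_, mem_erase.mpr ⟨hw.2.1, hw.1⟩⟩
      rintro rfl
      exact hw.2.2 huv
    have hMvU : M v ⊆ U := by
      intro w hw
      rw [hMmem] at hw
      refine mem_erase.mpr ⟨hw.2.1, mem_erase.mpr ⟨?_, hw.1⟩⟩
      rintro rfl
      exact hw.2.2 huv.symm
    have hdisjX : Disjoint X (M u ∪ M v) := by
      rw [Finset.disjoint_left]
      intro w hw hw'
      rw [hX, mem_inter, mem_neighborFinset, mem_neighborFinset] at hw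
      rw [mem_union, hMmem, hMmem] at hw'
      rcases hw' with h' | h'
      · exact h'.2.2 hw.1
      · exact h'.2.2 hw.2
    have hcover : U = X ∪ (M u ∪ M v) := by
      ext w
      constructor
      · intro hwU
        rw [hU, mem_erase, mem_erase] at hwU
        by_cases hadjU : G.Adj u w
        · by_cases hadjV : G.Adj v w
          · exact mem_union_left _ (by rw [hX, mem_inter, mem_neighborFinset, mem_neighborFinset]; exact ⟨hadjU, hadjV⟩)
          · exact mem_union_right _ (mem_union_right _ ((hMmem w v).mpr ⟨hwU.2.2, hwU.1, hadjV⟩))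
        · exact mem_union_right _ (mem_union_left _ ((hMmem w u).mpr ⟨hwU.2.2, hwU.2.1, hadjU⟩))
      · intro hw
        rcases mem_union.mp hw with h' | h'
        · exact hXU h'
        · rcases mem_union.mp h' with h'' | h''
          · exact hMuU h''
          · exact hMvU h''
    have h1 : #U = #X + #(M u ∪ M v) := by
      rw [hcover, card_union_of_disjoint hdisjX]
    have h2 : #(M u ∪ M v) + #(M u ∩ M v) = #(M u) + #(M v) := card_union_add_card_inter _ _
    have h3 : 4 ≤ #X := hbad u v huv
    have h4 := hMcard u hu
    have h5 := hMcard v hv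
    omega
  -- sums
  set D2 := ∑ w ∈ S, G.degree w * h w with hD2
  set C2 := ∑ w ∈ S, h w * (h w - 1) with hC2
  set H1 := ∑ w ∈ S, h w with hH1
  have hNf : ∀ u : V, S.filter (fun v => G.Adj u v) = G.neighborFinset u := by
    intro u; ext w
    simp only [mem_filter, mem_neighborFinset]
    exact ⟨fun h' => h'.2, fun h' => ⟨hsupp w u h'.symm, h'⟩⟩
  have hNf' : ∀ v : V, S.filter (fun u => G.Adj u v) = G.neighborFinset v := by
    intro v; ext w
    simp only [mem_filter, mem_neighborFinset]
    exact ⟨fun h' => h'.2.symm, fun h' => ⟨hsupp w v h'.symm, h'.symm⟩⟩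
  have swap1 : ∑ u ∈ S, ∑ v ∈ G.neighborFinset u, h v = D2 := by
    have step : ∀ u ∈ S, ∑ v ∈ G.neighborFinset u, h v
        = ∑ v ∈ S, if G.Adj u v then h v else 0 := by
      intro u _
      rw [← hNf u, sum_filter]
    rw [Finset.sum_congr rfl step, Finset.sum_comm]
    refine Finset.sum_congr rfl (fun v hv => ?_)
    rw [← Finset.sum_filter, hNf' v, sum_const, smul_eq_mul,
      card_neighborFinset_eq_degree, mul_comm]
  have hsum_deg : ∑ w ∈ S, G.degree w = 2 * e := sum_deg_S hsupp
  have inner_card : ∀ u v : V, #(M u ∩ M v) = ∑ w ∈ S, if w ∈ M u ∧ w ∈ M v then 1 else 0 := by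
    intro u v
    rw [← Finset.card_filter]
    congr 1
    ext w
    simp only [mem_inter, mem_filter]
    exact ⟨fun h' => ⟨hMsub u h'.1, h'⟩, fun h' => h'.2⟩
  have cherry_eq : ∑ u ∈ S, ∑ v ∈ S.erase u, #(M u ∩ M v) = C2 := by
    have e1 : ∀ u ∈ S, ∑ v ∈ S.erase u, #(M u ∩ M v)
        = ∑ v ∈ S, ∑ w ∈ S, if v ≠ u ∧ (w ∈ M u ∧ w ∈ M v) then 1 else 0 := by
      intro u _
      rw [← Finset.filter_ne', Finset.sum_filter]
      refine Finset.sum_congr rfl (fun v _ => ?_)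
      by_cases hvu : v ≠ u
      · rw [if_pos hvu, inner_card u v]
        refine Finset.sum_congr rfl (fun w _ => ?_)
        simp [hvu]
      · rw [if_neg hvu]
        symm
        apply Finset.sum_eq_zero
        intro w _
        rw [if_neg]
        tauto
    rw [Finset.sum_congr rfl e1]
    rw [Finset.sum_congr rfl (fun u _ => Finset.sum_comm)]
    rw [Finset.sum_comm]
    refine Finset.sum_congr rfl (fun w hw => ?_)
    have inner1 : ∀ u ∈ S, (∑ v ∈ S, if v ≠ u ∧ (w ∈ M u ∧ w ∈ M v) then 1 else 0)
        = if u ∈ M w then (h w - 1) else 0 := by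
      intro u hu
      by_cases hum : w ∈ M u
      · have hum' : u ∈ M w := (hMsymm w u hw hu).mp hum
        rw [if_pos hum']
        have hstep : ∀ v ∈ S, (if v ≠ u ∧ (w ∈ M u ∧ w ∈ M v) then 1 else 0)
            = if v ∈ (M w).erase u then 1 else 0 := by
          intro v hv
          have hiff : (v ≠ u ∧ (w ∈ M u ∧ w ∈ M v)) ↔ v ∈ (M w).erase u := by
            rw [mem_erase]
            constructor
            · rintro ⟨h1, _, h3⟩
              exact ⟨h1, (hMsymm w v hw hv).mp h3⟩
            · rintro ⟨h1, h2⟩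
              exact ⟨h1, hum, (hMsymm v w hv hw).mp h2⟩
          rw [if_congr hiff rfl rfl]
        rw [Finset.sum_congr rfl hstep, ← Finset.card_filter,
          Finset.filter_mem_eq_inter,
          Finset.inter_eq_right.mpr ((Finset.erase_subset _ _).trans (hMsub w)),
          card_erase_of_mem hum', hMcard w hw]
      · have hum' : u ∉ M w := fun hc => hum ((hMsymm u w hu hw).mp hc)
        rw [if_neg hum']
        apply Finset.sum_eq_zero
        intro v _
        rw [if_neg]
        tauto
    rw [Finset.sum_congr rfl inner1, ← Finset.sum_filter,
      Finset.filter_mem_eq_inter, Finset.inter_eq_right.mpr (hMsub w),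
      sum_const, smul_eq_mul, hMcard w hw]
  have hA : 2 * D2 ≤ C2 + (n - 6) * (2 * e) := by
    have lhs_eq : ∑ u ∈ S, ∑ v ∈ G.neighborFinset u, (h u + h v) = 2 * D2 := by
      have step : ∀ u ∈ S, ∑ v ∈ G.neighborFinset u, (h u + h v)
          = G.degree u * h u + ∑ v ∈ G.neighborFinset u, h v := by
        intro u _
        rw [Finset.sum_add_distrib, Finset.sum_const, smul_eq_mul,
          card_neighborFinset_eq_degree]
      rw [Finset.sum_congr rfl step, Finset.sum_add_distrib, swap1, ← hD2]
      omega
    have rhs_le : ∑ u ∈ S, ∑ v ∈ G.neighborFinset u, (h u + h v)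
        ≤ ∑ u ∈ S, ∑ v ∈ G.neighborFinset u, (#(M u ∩ M v) + (n - 6)) := by
      refine Finset.sum_le_sum (fun u hu => Finset.sum_le_sum (fun v hv => ?_))
      exact key u v (by rwa [mem_neighborFinset] at hv)
    have rhs_eq : ∑ u ∈ S, ∑ v ∈ G.neighborFinset u, (#(M u ∩ M v) + (n - 6))
        = (∑ u ∈ S, ∑ v ∈ G.neighborFinset u, #(M u ∩ M v)) + (n - 6) * (2 * e) := by
      have step : ∀ u ∈ S, ∑ v ∈ G.neighborFinset u, (#(M u ∩ M v) + (n - 6))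
          = (∑ v ∈ G.neighborFinset u, #(M u ∩ M v)) + G.degree u * (n - 6) := by
        intro u _
        rw [Finset.sum_add_distrib, Finset.sum_const, smul_eq_mul,
          card_neighborFinset_eq_degree]
      rw [Finset.sum_congr rfl step, Finset.sum_add_distrib, ← Finset.sum_mul, hsum_deg,
        mul_comm (2 * e) (n - 6)]
    have cherry_le : ∑ u ∈ S, ∑ v ∈ G.neighborFinset u, #(M u ∩ M v)
        ≤ ∑ u ∈ S, ∑ v ∈ S.erase u, #(M u ∩ M v) := by
      refine Finset.sum_le_sum (fun u hu => ?_)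
      exact Finset.sum_le_sum_of_subset (hNsub u)
    omega
  -- remaining scalar facts
  have hF2 : D2 + C2 = (n - 2) * H1 := by
    rw [hD2, hC2, hH1, Finset.mul_sum, ← Finset.sum_add_distrib]
    refine Finset.sum_congr rfl (fun w hw => ?_)
    have hdhw := hdh w hw
    cases hcw : h w with
    | zero => simp
    | succ k =>
      have hk2 : G.degree w + k = n - 2 := by omega
      have hs : k + 1 - 1 = k := rfl
      rw [hs]
      calc G.degree w * (k + 1) + (k + 1) * k
          = (G.degree w + k) * (k + 1) := by ring
        _ = (n - 2) * (k + 1) := by rw [hk2]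
  have hF3 : C2 ≤ (n - 8) * H1 := by
    rw [hC2, hH1, Finset.mul_sum]
    refine Finset.sum_le_sum (fun w hw => ?_)
    have h7w : h w ≤ n - 7 := by
      have h1 := hdh w hw
      have h2 := hdeg w hw
      omega
    calc h w * (h w - 1) ≤ h w * (n - 8) := Nat.mul_le_mul_left _ (by omega)
      _ = (n - 8) * h w := mul_comm _ _
  have hF4 : H1 + 2 * e = n * (n - 1) := by
    rw [hH1, ← hsum_deg, ← Finset.sum_add_distrib]
    have hstep : ∀ w ∈ S, h w + G.degree w = n - 1 := by
      intro w hw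
      have := hdh w hw
      omega
    rw [Finset.sum_congr rfl hstep, Finset.sum_const, smul_eq_mul, ← hn]
  have hcase : n = 7 ∨ n = 8 ∨ n = 9 ∨ n = 10 ∨ n = 11 := by omega
  rcases hcase with hc | hc | hc | hc | hc <;>
    rw [hc] at hA hF2 hF3 hF4 he <;> omega

open SimpleGraph Finset
variable {V : Type*} [Fintype V]

-- vertex deletion facts
lemma delete_vertex_facts (G : SimpleGraph V) (v : V) :
    ∃ G₂ : SimpleGraph V, G₂ ≤ G ∧ (∀ x y, G₂.Adj x y ↔ (G.Adj x y ∧ x ≠ v ∧ y ≠ v)) ∧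
      #G₂.edgeFinset = #G.edgeFinset - G.degree v := by
  classical
  refine ⟨G.deleteEdges (G.incidenceFinset v : Set (Sym2 V)), ?_, ?_, ?_⟩
  · exact G.deleteEdges_le _
  · intro x y
    rw [deleteEdges_adj]
    constructor
    · rintro ⟨hadj, hmem⟩
      refine ⟨hadj, ?_, ?_⟩ <;> rintro rfl <;> apply hmem <;>
        simp only [Finset.mem_coe, mem_incidenceFinset] <;>
        rw [mk'_mem_incidenceSet_iff]
      · exact ⟨hadj, Or.inl rfl⟩
      · exact ⟨hadj, Or.inr rfl⟩
    · rintro ⟨hadj, hx, hy⟩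
      refine ⟨hadj, fun hmem => ?_⟩
      simp only [Finset.mem_coe, mem_incidenceFinset] at hmem
      rw [mk'_mem_incidenceSet_iff] at hmem
      rcases hmem.2 with rfl | rfl
      · exact hx rfl
      · exact hy rfl
  · rw [edgeFinset_deleteEdges, card_sdiff_of_subset]
    · rw [card_incidenceFinset_eq_degree]
    · intro E hE
      rw [mem_incidenceFinset] at hE
      rw [mem_edgeFinset]
      exact G.incidenceSet_subset v hE

lemma deg5_clique_aux {G : SimpleGraph V} {v : V}
    (hbad : ∀ u w, G.Adj u w → 4 ≤ #(G.neighborFinset u ∩ G.neighborFinset w))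
    (hd : G.degree v = 5) :
    ∃ T : Finset V, #T = 6 ∧ ∀ x ∈ T, ∀ y ∈ T, x ≠ y → G.Adj x y := by
  classical
  have memN : ∀ a b : V, b ∈ G.neighborFinset a ↔ G.Adj a b := fun a b => by
    rw [mem_neighborFinset]
  have hNcard : #(G.neighborFinset v) = 5 := by
    rw [card_neighborFinset_eq_degree, hd]
  have hadjN : ∀ u ∈ G.neighborFinset v, ∀ w ∈ G.neighborFinset v, u ≠ w → G.Adj u w := by
    intro u hu w hw huw
    have huv : G.Adj u v := ((memN _ _).mp hu).symm
    have hsub : G.neighborFinset u ∩ G.neighborFinset v ⊆ (G.neighborFinset v).erase u := by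
      intro x hx
      rw [mem_inter] at hx
      refine mem_erase.mpr ⟨?_, hx.2⟩
      rintro rfl
      exact G.loopless.irrefl _ ((memN _ _).mp hx.1)
    have hc4 : #((G.neighborFinset v).erase u) = 4 := by
      rw [card_erase_of_mem hu, hNcard]
    have heq : G.neighborFinset u ∩ G.neighborFinset v = (G.neighborFinset v).erase u :=
      Finset.eq_of_subset_of_card_le hsub (by rw [hc4]; exact hbad u v huv)
    have hwmem : w ∈ G.neighborFinset u ∩ G.neighborFinset v := by
      rw [heq]
      exact mem_erase.mpr ⟨huw.symm, hw⟩
    exact (memN _ _).mp (mem_inter.mp hwmem).1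
  refine ⟨insert v (G.neighborFinset v), ?_, ?_⟩
  · rw [card_insert_of_notMem, hNcard]
    intro h
    exact G.loopless.irrefl v ((memN _ _).mp h)
  · intro x hx y hy hxy
    rcases mem_insert.mp hx with rfl | hx'
    · rcases mem_insert.mp hy with rfl | hy'
      · exact absurd rfl hxy
      · exact (memN _ _).mp hy'
    · rcases mem_insert.mp hy with rfl | hy'
      · exact ((memN _ _).mp hx').symm
      · exact hadjN x hx' y hy' hxy

lemma base_case_clique {G : SimpleGraph V} {S : Finset V}
    (hsupp : ∀ a b, G.Adj a b → a ∈ S) (h6 : #S = 6)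
    (he : 15 ≤ #G.edgeFinset) :
    ∀ x ∈ S, ∀ y ∈ S, x ≠ y → G.Adj x y := by
  classical
  by_contra hc
  push_neg at hc
  obtain ⟨x, hx, y, hy, hxy, hnadj⟩ := hc
  have hsum : ∑ w ∈ S, G.degree w = 2 * #G.edgeFinset := by
    rw [← sum_degrees_eq_twice_card_edges]
    apply Finset.sum_subset (Finset.subset_univ S)
    intro z _ hz
    rw [← card_neighborFinset_eq_degree, Finset.card_eq_zero]
    ext w
    simp only [mem_neighborFinset, Finset.notMem_empty, iff_false]
    intro h
    exact hz (hsupp z w h)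
  have hNsub : ∀ w : V, G.neighborFinset w ⊆ S.erase w := by
    intro w z hz
    rw [mem_neighborFinset] at hz
    exact Finset.mem_erase.mpr ⟨hz.ne', hsupp z w hz.symm⟩
  have hdx : G.degree x ≤ 4 := by
    have hsub : G.neighborFinset x ⊆ (S.erase x).erase y := by
      intro w hw
      rw [mem_neighborFinset] at hw
      refine mem_erase.mpr ⟨?_, hNsub x (by rwa [mem_neighborFinset])⟩
      rintro rfl
      exact hnadj hw
    calc G.degree x = #(G.neighborFinset x) := (card_neighborFinset_eq_degree _ _).symm
      _ ≤ #((S.erase x).erase y) := card_le_card hsub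
      _ ≤ 4 := by
          rw [card_erase_of_mem (mem_erase.mpr ⟨hxy.symm, hy⟩), card_erase_of_mem hx, h6]
  have hdy : G.degree y ≤ 4 := by
    have hsub : G.neighborFinset y ⊆ (S.erase y).erase x := by
      intro w hw
      rw [mem_neighborFinset] at hw
      refine mem_erase.mpr ⟨?_, hNsub y (by rwa [mem_neighborFinset])⟩
      rintro rfl
      exact hnadj hw.symm
    calc G.degree y = #(G.neighborFinset y) := (card_neighborFinset_eq_degree _ _).symm
      _ ≤ #((S.erase y).erase x) := card_le_card hsub
      _ ≤ 4 := by
          rw [card_erase_of_mem (mem_erase.mpr ⟨hxy, hx⟩), card_erase_of_mem hy, h6]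
  have hy' : y ∈ S.erase x := mem_erase.mpr ⟨hxy.symm, hy⟩
  have hsplit1 : ∑ w ∈ S, G.degree w = G.degree x + ∑ w ∈ S.erase x, G.degree w :=
    (Finset.add_sum_erase _ _ hx).symm
  have hsplit2 : ∑ w ∈ S.erase x, G.degree w
      = G.degree y + ∑ w ∈ (S.erase x).erase y, G.degree w :=
    (Finset.add_sum_erase _ _ hy').symm
  have hrest : ∑ w ∈ (S.erase x).erase y, G.degree w ≤ 4 * 5 := by
    have hcard : #((S.erase x).erase y) = 4 := by
      rw [card_erase_of_mem hy', card_erase_of_mem hx, h6]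
    calc ∑ w ∈ (S.erase x).erase y, G.degree w
        ≤ ∑ _w ∈ (S.erase x).erase y, 5 := by
          refine Finset.sum_le_sum (fun w hw => ?_)
          have hwS : w ∈ S := mem_of_mem_erase (mem_of_mem_erase hw)
          calc G.degree w = #(G.neighborFinset w) := (card_neighborFinset_eq_degree _ _).symm
            _ ≤ #(S.erase w) := card_le_card (hNsub w)
            _ = 5 := by rw [card_erase_of_mem hwS, h6]
      _ = 4 * 5 := by rw [Finset.sum_const, hcard, smul_eq_mul]
  omega
lemma contract_card {G : SimpleGraph V} {u v : V} (huv : G.Adj u v) :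
    #G.edgeFinset
      ≤ #(contractAt G u v).edgeFinset + (#(G.neighborFinset u ∩ G.neighborFinset v) + 1) := by
  classical
  set c := #(G.neighborFinset u ∩ G.neighborFinset v) with hc
  set f : V → V := fun w => if w = v then u else w with hf
  set Bad : Finset (Sym2 V) :=
    insert s(u, v) ((G.neighborFinset u ∩ G.neighborFinset v).image (fun w => s(v, w)))
    with hBad
  have hBadcard : #Bad ≤ c + 1 := by
    refine (card_insert_le _ _).trans ?_
    have := Finset.card_image_le
      (s := G.neighborFinset u ∩ G.neighborFinset v) (f := fun w => s(v, w))
    omega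
  set D := G.edgeFinset \ Bad with hD
  have hDcard : #G.edgeFinset ≤ #D + (c + 1) := by
    have h1 : #G.edgeFinset - #Bad ≤ #D := Finset.le_card_sdiff _ _
    omega
  have hfix : ∀ (E : Sym2 V), v ∉ E → Sym2.map f E = E := by
    intro E hv
    induction E using Sym2.ind with
    | _ x y =>
      rw [Sym2.mem_iff] at hv
      push_neg at hv
      rw [Sym2.map_pair_eq, hf]
      simp only []
      rw [if_neg (fun h => hv.1 h.symm), if_neg (fun h => hv.2 h.symm)]
  have hrep : ∀ (E : Sym2 V), E ∈ D → v ∈ E →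
      ∃ y, y ≠ v ∧ y ≠ u ∧ E = s(v, y) ∧ G.Adj v y ∧ ¬G.Adj u y ∧
        Sym2.map f E = s(u, y) := by
    intro E hE hv
    obtain ⟨y, rfl⟩ := (Sym2.mem_iff_exists).mp hv
    rw [hD, mem_sdiff, mem_edgeFinset, mem_edgeSet] at hE
    obtain ⟨hadj, hnb⟩ := hE
    have hyv : y ≠ v := fun h => G.loopless.irrefl v (h ▸ hadj)
    have hyu : y ≠ u := by
      rintro rfl
      exact hnb (hBad ▸ mem_insert.mpr (Or.inl Sym2.eq_swap))
    have hnadj : ¬G.Adj u y := by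
      intro hadj2
      apply hnb
      rw [hBad]
      refine mem_insert.mpr (Or.inr (Finset.mem_image.mpr ⟨y, ?_, rfl⟩))
      rw [mem_inter, mem_neighborFinset, mem_neighborFinset]
      exact ⟨hadj2, hadj⟩
    refine ⟨y, hyv, hyu, rfl, hadj, hnadj, ?_⟩
    rw [Sym2.map_pair_eq, hf]
    simp [hyv]
  have hmap : ∀ E ∈ D, Sym2.map f E ∈ (contractAt G u v).edgeFinset := by
    intro E hE
    by_cases hv : v ∈ E
    · obtain ⟨y, hyv, hyu, hEeq, hadj, hnadj, hm⟩ := hrep E hE hv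
      rw [hm, mem_edgeFinset, mem_edgeSet]
      exact ⟨Ne.symm hyu, huv.ne, hyv, Or.inr (Or.inl ⟨rfl, hadj⟩)⟩
    · rw [hfix E hv]
      induction E using Sym2.ind with
      | _ x y =>
        rw [hD, mem_sdiff, mem_edgeFinset, mem_edgeSet] at hE
        rw [Sym2.mem_iff] at hv
        push_neg at hv
        rw [mem_edgeFinset, mem_edgeSet]
        exact ⟨hE.1.ne, fun h => hv.1 h.symm, fun h => hv.2 h.symm, Or.inl hE.1⟩
  have hinj : Set.InjOn (Sym2.map f) ↑D := by
    intro E1 h1 E2 h2 heq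
    simp only [Finset.mem_coe] at h1 h2
    by_cases hv1 : v ∈ E1
    · obtain ⟨y1, hy1v, hy1u, hE1, hadj1, hnadj1, hm1⟩ := hrep E1 h1 hv1
      by_cases hv2 : v ∈ E2
      · obtain ⟨y2, hy2v, hy2u, hE2, hadj2, hnadj2, hm2⟩ := hrep E2 h2 hv2
        rw [hm1, hm2] at heq
        rw [Sym2.eq_iff] at heq
        rcases heq with ⟨-, rfl⟩ | ⟨h1', h2'⟩
        · rw [hE1, hE2]
        · exact absurd h2' hy1u
      · exfalso
        rw [hfix E2 hv2, hm1] at heq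
        rw [hD, mem_sdiff, mem_edgeFinset, ← heq, mem_edgeSet] at h2
        exact hnadj1 h2.1
    · by_cases hv2 : v ∈ E2
      · exfalso
        obtain ⟨y2, hy2v, hy2u, hE2, hadj2, hnadj2, hm2⟩ := hrep E2 h2 hv2
        rw [hfix E1 hv1, hm2] at heq
        rw [hD, mem_sdiff, mem_edgeFinset, heq, mem_edgeSet] at h1
        exact hnadj2 h1.1
      · rw [hfix E1 hv1, hfix E2 hv2] at heq
        exact heq
  have hcard2 := Finset.card_le_card_of_injOn (Sym2.map f) hmap hinj
  omega

variable {W : Type*} [Fintype W]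

lemma edge_bound {G : SimpleGraph W} {S : Finset W}
    (hsupp : ∀ a b, G.Adj a b → a ∈ S) :
    2 * #G.edgeFinset ≤ #S * (#S - 1) := by
  rw [← sum_deg_S hsupp]
  calc ∑ w ∈ S, G.degree w ≤ ∑ _w ∈ S, (#S - 1) := by
        refine Finset.sum_le_sum (fun w hw => ?_)
        calc G.degree w = #(G.neighborFinset w) := (card_neighborFinset_eq_degree _ _).symm
          _ ≤ #(S.erase w) := card_le_card (supp_neighbor hsupp w)
          _ = #S - 1 := by rw [card_erase_of_mem hw]
    _ = #S * (#S - 1) := by rw [Finset.sum_const, smul_eq_mul]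

lemma ML (k : ℕ) : ∀ (G : SimpleGraph W) (S : Finset W),
    (∀ a b, G.Adj a b → a ∈ S) → 6 ≤ #S → #S ≤ 11 →
    4 * #S - 9 ≤ #G.edgeFinset → #S * 100 + #G.edgeFinset ≤ k →
    G.HasCompleteMinor 6 := by
  induction k with
  | zero =>
    intro G S hsupp h6 h11 he hk
    omega
  | succ k ih =>
    intro G S hsupp h6 h11 he hk
    by_cases hbase : #S = 6
    · exact clique_finset_minor hbase
        (base_case_clique hsupp hbase (by omega))
    · have h7 : 7 ≤ #S := by omega
      by_cases hex : 4 * #S - 9 < #G.edgeFinset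
      · -- delete an arbitrary edge
        obtain ⟨E, hE⟩ := Finset.card_pos.mp (show 0 < #G.edgeFinset by omega)
        set G₂ := G.deleteEdges (({E} : Finset (Sym2 W)) : Set (Sym2 W)) with hG₂
        have hle : G₂ ≤ G := G.deleteEdges_le _
        have hcard : #G₂.edgeFinset = #G.edgeFinset - 1 := by
          show #(G.deleteEdges (({E} : Finset (Sym2 W)) : Set (Sym2 W))).edgeFinset = _
          rw [edgeFinset_deleteEdges]
          rw [card_sdiff_of_subset (Finset.singleton_subset_iff.mpr hE),
            Finset.card_singleton]
        apply minor_mono hle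
        exact ih G₂ S (fun a b hab => hsupp a b (hle hab)) h6 h11 (by convert (show 4 * #S - 9 ≤ #G.edgeFinset - 1 by omega) using 2; convert hcard) (by convert (show #S * 100 + (#G.edgeFinset - 1) ≤ k by omega) using 3; convert hcard)
      · have heq : #G.edgeFinset = 4 * #S - 9 := by omega
        by_cases hdeg : ∃ v ∈ S, G.degree v ≤ 4
        · obtain ⟨v, hv, hdv⟩ := hdeg
          obtain ⟨G₂, hle, hadj2, hcard2⟩ := delete_vertex_facts G v
          have hd' : G.degree v ≤ #G.edgeFinset := by
            have h2 := edge_bound hsupp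
            omega
          apply minor_mono hle
          refine ih G₂ (S.erase v) ?_ ?_ ?_ ?_ ?_
          · intro a b hab
            rw [hadj2] at hab
            exact mem_erase.mpr ⟨hab.2.1, hsupp a b hab.1⟩
          · rw [card_erase_of_mem hv]; omega
          · rw [card_erase_of_mem hv]; omega
          · rw [card_erase_of_mem hv, hcard2]; omega
          · rw [card_erase_of_mem hv, hcard2]; omega
        · push_neg at hdeg
          by_cases hcon : ∃ u v, G.Adj u v ∧ #(G.neighborFinset u ∩ G.neighborFinset v) ≤ 3
          · obtain ⟨u, v, huv, hcom⟩ := hcon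
            set G₂ := contractAt G u v with hG₂
            have hvS : v ∈ S := hsupp v u huv.symm
            have hsupp2 : ∀ a b, G₂.Adj a b → a ∈ S.erase v := by
              intro a b hab
              obtain ⟨h1, h2, h3, h4⟩ := hab
              refine mem_erase.mpr ⟨h2, ?_⟩
              rcases h4 with h' | ⟨ha, _⟩ | ⟨_, h'⟩
              · exact hsupp a b h'
              · rw [ha]; exact hsupp u v huv
              · exact hsupp a v h'.symm
            have hcc := contract_card huv
            have hb2 : 2 * #G₂.edgeFinset ≤ #(S.erase v) * (#(S.erase v) - 1) :=
              edge_bound hsupp2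
            have hcc2 : #G.edgeFinset
                ≤ #G₂.edgeFinset + (#(G.neighborFinset u ∩ G.neighborFinset v) + 1) := by
              rw [hG₂]; exact hcc
            have hse : #(S.erase v) = #S - 1 := card_erase_of_mem hvS
            have h110 : #(S.erase v) * (#(S.erase v) - 1) ≤ 11 * 10 :=
              Nat.mul_le_mul (by omega) (by omega)
            apply contract_lift huv
            exact ih G₂ (S.erase v) hsupp2 (by omega) (by omega) (by omega) (by omega)
          · push_neg at hcon
            by_cases hd5 : ∃ v ∈ S, G.degree v = 5
            · obtain ⟨v, hv, hdv⟩ := hd5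
              obtain ⟨T, hT6, hTadj⟩ :=
                deg5_clique_aux (fun a b hab => by
                  have := hcon a b hab
                  omega) hdv
              exact clique_finset_minor hT6 hTadj
            · exfalso
              push_neg at hd5
              refine counting_contradiction hsupp h7 h11 heq ?_ ?_
              · intro w hw
                have h1 := hdeg w hw
                have h2 := hd5 w hw
                omega
              · intro a b hab
                have := hcon a b hab
                omega

end K6MinorProof

theorem order11_size35_hasK6Minor {V : Type*} [Fintype V] (G : SimpleGraph V)
    (hcard : Fintype.card V = 11) (hsize : 35 ≤ G.edgeFinset.card) :
    G.HasCompleteMinor 6 := by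
  classical
  have hS : (Finset.univ : Finset V).card = 11 := by rw [Finset.card_univ, hcard]
  have hsupp : ∀ a b : V, G.Adj a b → a ∈ (Finset.univ : Finset V) :=
    fun a b _ => Finset.mem_univ a
  have hb := K6MinorProof.edge_bound hsupp
  rw [hS] at hb
  exact K6MinorProof.ML 1200 G Finset.univ hsupp (by omega) (by omega) (by omega) (by omega)
end

section
/- Let G be a simple graph of order 12 with minimum degree at least 6, let v be a vertex of G of degree 6 with neighborhood N(v) of size 6, and suppose the subgraph of G induced on the 5 vertices outside {v} ∪ N(v) is a complete graph K_5. Then G contains a K_6 minor. -/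
attribute [local instance] Classical.propDecidable

theorem order12_minDegree6_outsideK5_hasK6Minor {V : Type*} [Fintype V] (G : SimpleGraph V)
    (hcard : Fintype.card V = 12) (hdeg : ∀ u : V, 6 ≤ G.degree u)
    (v : V) (hv : G.degree v = 6)
    (hnbhd : (G.neighborSet v).ncard = 6)
    (hK5 : ∀ u w : V, u ∉ insert v (G.neighborSet v) → w ∉ insert v (G.neighborSet v) →
      u ≠ w → G.Adj u w) :
    G.HasCompleteMinor 6 := by
  classical
  set N : Set V := insert v (G.neighborSet v) with hN
  have hvN : v ∈ N := Set.mem_insert _ _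
  have hvnot : v ∉ G.neighborSet v := fun h => G.irrefl h
  have hN7 : N.ncard = 7 := by
    rw [hN, Set.ncard_insert_of_notMem hvnot (Set.toFinite _), hnbhd]
  have hcard' : Nat.card V = 12 := by rw [Nat.card_eq_fintype_card, hcard]
  have hS5 : Nᶜ.ncard = 5 := by
    have h := Set.ncard_add_ncard_compl N
    omega
  have hcardS : Fintype.card ↥(Nᶜ) = 5 := by
    rw [← Nat.card_eq_fintype_card, Nat.card_coe_set_eq, hS5]
  let e : Fin 5 ≃ ↥(Nᶜ) := (Fintype.equivFinOfCardEq hcardS).symm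
  have hdegnc : ∀ u : V, (G.neighborSet u).ncard = G.degree u := by
    intro u
    rw [← Nat.card_coe_set_eq, Nat.card_eq_fintype_card,
      SimpleGraph.card_neighborSet_eq_degree]
  have hnb : ∀ u : V, u ∈ Nᶜ → ∃ w ∈ N, G.Adj u w := by
    intro u hu
    by_contra h
    push_neg at h
    have hsub : G.neighborSet u ⊆ Nᶜ \ {u} := by
      intro w hw
      refine ⟨fun hwN => h w hwN hw, ?_⟩
      simp only [Set.mem_singleton_iff]
      exact fun hwu => G.irrefl (hwu ▸ hw)
    have h1 : (G.neighborSet u).ncard ≤ (Nᶜ \ {u}).ncard :=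
      Set.ncard_le_ncard hsub (Set.toFinite _)
    have h2 : (Nᶜ \ {u}).ncard = 4 := by
      rw [Set.ncard_diff_singleton_of_mem hu, hS5]
    have h3 := hdeg u
    rw [hdegnc u] at h1
    omega
  refine ⟨fun i => if h : (i : ℕ) < 5 then {(e ⟨i, h⟩ : V)} else N, ?_, ?_, ?_, ?_⟩
  · intro i
    by_cases h : (i : ℕ) < 5
    · beta_reduce; rw [dif_pos h]; exact Set.singleton_nonempty _
    · beta_reduce; rw [dif_neg h]; exact ⟨v, hvN⟩
  · intro i
    by_cases h : (i : ℕ) < 5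
    · beta_reduce; rw [dif_pos h]
      rw [SimpleGraph.connected_iff]
      refine ⟨fun a b => ?_, ⟨⟨_, rfl⟩⟩⟩
      have hab : a = b := Subsingleton.elim a b
      rw [hab]
    · beta_reduce; rw [dif_neg h]
      rw [SimpleGraph.connected_iff]
      refine ⟨?_, ⟨⟨v, hvN⟩⟩⟩
      have ra : ∀ a : ↥N, (G.induce N).Reachable a ⟨v, hvN⟩ := by
        intro a
        rcases Set.mem_insert_iff.mp a.2 with h1 | h1
        · have : a = ⟨v, hvN⟩ := Subtype.ext h1
          rw [this]
        · exact SimpleGraph.Adj.reachable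
            (by show G.Adj (↑a) v; exact ((SimpleGraph.mem_neighborSet G v ↑a).mp h1).symm)
      intro a b
      exact (ra a).trans (ra b).symm
  · intro i j hij
    by_cases hi : (i : ℕ) < 5 <;> by_cases hj : (j : ℕ) < 5
    · beta_reduce; rw [dif_pos hi, dif_pos hj, Set.disjoint_singleton]
      intro heq
      have h5 := e.injective (Subtype.ext heq)
      simp only [Fin.mk.injEq] at h5
      exact hij (Fin.ext h5)
    · beta_reduce; rw [dif_pos hi, dif_neg hj, Set.disjoint_singleton_left]
      exact (e ⟨i, hi⟩).2
    · beta_reduce; rw [dif_neg hi, dif_pos hj, Set.disjoint_singleton_right]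
      exact (e ⟨j, hj⟩).2
    · exact absurd (Fin.ext (by omega : (i : ℕ) = j)) hij
  · intro i j hij
    by_cases hi : (i : ℕ) < 5 <;> by_cases hj : (j : ℕ) < 5
    · beta_reduce; rw [dif_pos hi, dif_pos hj]
      refine ⟨_, rfl, _, rfl, ?_⟩
      refine hK5 _ _ (e ⟨i, hi⟩).2 (e ⟨j, hj⟩).2 ?_
      intro heq
      have h5 := e.injective (Subtype.ext heq)
      simp only [Fin.mk.injEq] at h5
      exact hij (Fin.ext h5)
    · beta_reduce; rw [dif_pos hi, dif_neg hj]
      obtain ⟨w, hwN, hadj⟩ := hnb _ (e ⟨i, hi⟩).2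
      exact ⟨_, rfl, w, hwN, hadj⟩
    · beta_reduce; rw [dif_neg hi, dif_pos hj]
      obtain ⟨w, hwN, hadj⟩ := hnb _ (e ⟨j, hj⟩).2
      exact ⟨w, hwN, _, rfl, hadj.symm⟩
    · exact absurd (Fin.ext (by omega : (i : ℕ) = j)) hij
end
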